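/- Fix an integer n ≥ 0 and real parameters p, q with 0 ≤ q < p. Then, as L → ∞, the restricted partition function satisfies R(L, n; p, q) ~ (1 + n·p)^{L−1} / (n!·(p−q)^{n}); precisely, the function L ↦ R(L, n; p, q) · n! · (p−q)^{n} / (1 + n·p)^{L−1} tends to 1 as L → ∞ (Filter.Tendsto along atTop to the neighborhood of 1). -/
import Mathlib


open Finset

/-- The stationary weight of a word `a` with entries in `{0,1}` (encoded as `Fin 2`):
the product over positions `i` with `a i = 0` of `1 + p·m_i(a) + q·n_i(a)`,
where `m_i(a)` (resp. `n_i(a)`) is the number of `1`'s strictly before (resp. after) `i`. -/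
noncomputable def wt (p q : ℝ) {m : ℕ} (a : Fin m → Fin 2) : ℝ :=
  ∏ i ∈ univ.filter (fun i => a i = 0),
    (1 + p * ((univ.filter (fun j => j < i ∧ a j = 1)).card : ℝ)
       + q * ((univ.filter (fun j => i < j ∧ a j = 1)).card : ℝ))

/-- The number of `1`'s in the word `a`. -/
def ones {m : ℕ} (a : Fin m → Fin 2) : ℕ := (univ.filter (fun i => a i = 1)).card

/-- The restricted partition function `R(L, n; p, q)`: the sum of the weights `wt p q a`
over all words `a` of length `L - 1` with entries in `{0,1}` having exactly `n` ones. -/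
noncomputable def R (L n : ℕ) (p q : ℝ) : ℝ :=
  ∑ a ∈ univ.filter (fun a : Fin (L - 1) → Fin 2 => ones a = n), wt p q a


noncomputable def Hsum (k N : ℕ) (d : Fin k → ℝ) : ℝ :=
  ∑ g ∈ Finset.Nat.antidiagonalTuple k N, ∏ i, d i ^ g i

theorem Hsum_zero_right (k : ℕ) (d : Fin k → ℝ) : Hsum k 0 d = 1 := by
  simp [Hsum, Finset.Nat.antidiagonalTuple_zero_right]

theorem Hsum_zero_left (N : ℕ) (d : Fin 0 → ℝ) : Hsum 0 (N+1) d = 0 := by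
  simp [Hsum, Finset.Nat.antidiagonalTuple_zero_succ]

theorem Hsum_succ_succ (k N : ℕ) (d : Fin (k+1) → ℝ) :
    Hsum (k+1) (N+1) d = d 0 * Hsum (k+1) N d + Hsum k (N+1) (Fin.tail d) := by
  classical
  rw [Hsum, ← Finset.sum_filter_add_sum_filter_not _ (fun g => g 0 = 0)]
  conv_rhs => rw [add_comm]
  congr 1
  · rw [Hsum]
    refine Finset.sum_nbij' (i := fun g => Fin.tail g) (j := fun h => Fin.cons 0 h) ?_ ?_ ?_ ?_ ?_
    · intro g hg
      simp only [mem_filter, Finset.Nat.mem_antidiagonalTuple] at hg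
      rw [Finset.Nat.mem_antidiagonalTuple]
      have h1 := hg.1
      rw [Fin.sum_univ_succ, hg.2, zero_add] at h1
      simpa [Fin.tail] using h1
    · intro h hh
      simp only [Finset.Nat.mem_antidiagonalTuple] at hh
      simp [Finset.Nat.mem_antidiagonalTuple, Fin.sum_univ_succ, hh]
    · intro g hg
      simp only [mem_filter] at hg
      rw [← hg.2]
      exact Fin.cons_self_tail g
    · intro h hh; funext i; simp [Fin.tail_cons]
    · intro g hg
      simp only [mem_filter] at hg
      rw [Fin.prod_univ_succ, hg.2]
      simp [Fin.tail]
  · rw [Hsum, Finset.mul_sum]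
    refine Finset.sum_nbij' (i := fun g => Function.update g 0 (g 0 - 1))
      (j := fun h => Function.update h 0 (h 0 + 1)) ?_ ?_ ?_ ?_ ?_
    · intro g hg
      simp only [mem_filter, Finset.Nat.mem_antidiagonalTuple] at hg
      rw [Finset.Nat.mem_antidiagonalTuple]
      rw [Fin.sum_univ_succ] at hg ⊢
      have h0 : 1 ≤ g 0 := Nat.one_le_iff_ne_zero.2 hg.2
      simp only [Function.update_self]
      have : ∀ i : Fin k, Function.update g 0 (g 0 - 1) i.succ = g i.succ := by
        intro i; exact Function.update_of_ne (Fin.succ_ne_zero i) _ g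
      rw [Finset.sum_congr rfl (fun i _ => this i)]
      omega
    · intro h hh
      simp only [Finset.Nat.mem_antidiagonalTuple] at hh
      simp only [mem_filter, Finset.Nat.mem_antidiagonalTuple]
      rw [Fin.sum_univ_succ] at hh ⊢
      have : ∀ i : Fin k, Function.update h 0 (h 0 + 1) i.succ = h i.succ := by
        intro i; exact Function.update_of_ne (Fin.succ_ne_zero i) _ h
      rw [Finset.sum_congr rfl (fun i _ => this i)]
      simp only [Function.update_self]
      omega
    · intro g hg
      simp only [mem_filter] at hg
      have h0 : 1 ≤ g 0 := Nat.one_le_iff_ne_zero.2 hg.2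
      funext i
      rcases eq_or_ne i 0 with rfl | hi
      · simp [Function.update_self]; omega
      · simp [Function.update_of_ne hi]
    · intro h hh
      funext i
      rcases eq_or_ne i 0 with rfl | hi
      · simp [Function.update_self]
      · simp [Function.update_of_ne hi]
    · intro g hg
      simp only [mem_filter, Finset.Nat.mem_antidiagonalTuple] at hg
      have h0 : 1 ≤ g 0 := Nat.one_le_iff_ne_zero.2 hg.2
      rw [Fin.prod_univ_succ, Fin.prod_univ_succ]
      have h1 : ∀ i : Fin k, Function.update g 0 (g 0 - 1) i.succ = g i.succ := by
        intro i; exact Function.update_of_ne (Fin.succ_ne_zero i) _ g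
      simp only [h1, Function.update_self]
      rw [← mul_assoc, ← pow_succ']
      congr 2
      omega



noncomputable def wtc (p q c : ℝ) {m : ℕ} (a : Fin m → Fin 2) : ℝ :=
  ∏ i, (if a i = 0 then
    (c + p * ((univ.filter (fun j => j < i ∧ a j = 1)).card : ℝ)
       + q * ((univ.filter (fun j => i < j ∧ a j = 1)).card : ℝ)) else 1)

noncomputable def W (p q c : ℝ) (m n : ℕ) : ℝ :=
  ∑ a : Fin m → Fin 2, if ones a = n then wtc p q c a else 0

theorem ones_cons {m : ℕ} (x : Fin 2) (b : Fin m → Fin 2) :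
    ones ((Fin.cons x b : Fin (m+1) → Fin 2)) = (if x = 1 then 1 else 0) + ones b := by
  rw [ones, ones, Finset.card_filter, Finset.card_filter, Fin.sum_univ_succ]
  simp [Fin.cons_zero, Fin.cons_succ]

theorem mct_cons {m : ℕ} (x : Fin 2) (b : Fin m → Fin 2) (i : Fin m) :
    (univ.filter (fun j => j < i.succ ∧ (Fin.cons x b : Fin (m+1) → Fin 2) j = 1)).card
      = (if x = 1 then 1 else 0) + (univ.filter (fun j => j < i ∧ b j = 1)).card := by
  rw [Finset.card_filter, Finset.card_filter, Fin.sum_univ_succ]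
  simp [Fin.cons_zero, Fin.cons_succ, Fin.succ_lt_succ_iff, Fin.succ_pos]

theorem nct_cons {m : ℕ} (x : Fin 2) (b : Fin m → Fin 2) (i : Fin m) :
    (univ.filter (fun j => i.succ < j ∧ (Fin.cons x b : Fin (m+1) → Fin 2) j = 1)).card
      = (univ.filter (fun j => i < j ∧ b j = 1)).card := by
  rw [Finset.card_filter, Finset.card_filter, Fin.sum_univ_succ]
  simp [Fin.cons_succ, Fin.succ_lt_succ_iff, Fin.not_lt_zero]

theorem nct_cons_zero {m : ℕ} (x : Fin 2) (b : Fin m → Fin 2) :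
    (univ.filter (fun j => (0 : Fin (m+1)) < j ∧ (Fin.cons x b : Fin (m+1) → Fin 2) j = 1)).card = ones b := by
  rw [Finset.card_filter, Fin.sum_univ_succ, ones, Finset.card_filter]
  simp [Fin.cons_succ, Fin.succ_pos]

theorem wtc_cons_zero (p q c : ℝ) {m : ℕ} (b : Fin m → Fin 2) :
    wtc p q c ((Fin.cons 0 b : Fin (m+1) → Fin 2)) = (c + q * ones b) * wtc p q c b := by
  rw [wtc, Fin.prod_univ_succ]
  congr 1
  · rw [nct_cons_zero]
    simp [Fin.cons_zero]
  · rw [wtc]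
    refine Finset.prod_congr rfl fun i _ => ?_
    rw [Fin.cons_succ, mct_cons, nct_cons]
    simp
theorem wtc_cons_one (p q c : ℝ) {m : ℕ} (b : Fin m → Fin 2) :
    wtc p q c ((Fin.cons 1 b : Fin (m+1) → Fin 2)) = wtc p q (c + p) b := by
  rw [wtc, Fin.prod_univ_succ, wtc]
  rw [if_neg (by simp : ¬ ((Fin.cons 1 b : Fin (m+1) → Fin 2) 0 = 0)), one_mul]
  refine Finset.prod_congr rfl fun i _ => ?_
  rw [Fin.cons_succ, mct_cons, nct_cons]
  push_cast
  ring_nf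

theorem W_succ (p q c : ℝ) (m n : ℕ) :
    W p q c (m+1) n = (c + q * n) * W p q c m n +
      (match n with | 0 => (0:ℝ) | Nat.succ n' => W p q (c+p) m n') := by
  rw [W, ← Equiv.sum_comp (Fin.consEquiv (fun _ : Fin (m+1) => Fin 2))
      (fun a => if ones a = n then wtc p q c a else 0), Fintype.sum_prod_type,
      Fin.sum_univ_two]
  have e0 : ∀ x : Fin 2, ∀ b : Fin m → Fin 2,
      (Fin.consEquiv (fun _ : Fin (m+1) => Fin 2)) (x, b) = Fin.cons x b := fun _ _ => rfl
  simp only [e0]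
  congr 1
  · rw [W, Finset.mul_sum]
    refine Finset.sum_congr rfl fun b _ => ?_
    rw [ones_cons, wtc_cons_zero]
    simp only [show ((0:Fin 2) = 1) = False by simp, if_false, zero_add]
    split_ifs with h
    · rw [h]
    · rw [mul_zero]
  · cases n with
    | zero =>
      refine Finset.sum_eq_zero fun b _ => ?_
      rw [ones_cons]
      simp
    | succ n' =>
      show _ = W p q (c + p) m n'
      rw [W]
      refine Finset.sum_congr rfl fun b _ => ?_
      rw [ones_cons, wtc_cons_one]
      simp only [show ((1:Fin 2) = 1) = True by simp, if_true]
      by_cases h : ones b = n'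
      · rw [if_pos h, if_pos (by omega)]
      · rw [if_neg h, if_neg (by omega)]

theorem W_zero_zero (p q c : ℝ) : W p q c 0 0 = 1 := by
  rw [W]
  rw [show (univ : Finset (Fin 0 → Fin 2)) = {fun i => i.elim0} from by
    apply Finset.eq_singleton_iff_unique_mem.2
    exact ⟨Finset.mem_univ _, fun a _ => funext fun i => i.elim0⟩]
  rw [Finset.sum_singleton]
  simp [ones, wtc]

theorem W_gt (p q c : ℝ) (m n : ℕ) (h : m < n) : W p q c m n = 0 := by
  rw [W]
  refine Finset.sum_eq_zero fun a _ => ?_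
  rw [if_neg]
  intro hc
  have : ones a ≤ m := (Finset.card_filter_le _ _).trans_eq (by simp)
  omega

theorem W_eq_Hsum (p q : ℝ) : ∀ m n (c : ℝ), n ≤ m →
    W p q c m n = Hsum (n+1) (m - n)
      (fun k => c + p * ((k:ℕ) : ℝ) + q * ((n - (k:ℕ) : ℕ) : ℝ)) := by
  intro m
  induction m with
  | zero =>
    intro n c hn
    interval_cases n
    rw [Nat.zero_sub, Hsum_zero_right, W_zero_zero]
  | succ m ih =>
    intro n c hn
    rw [W_succ]
    cases n with
    | zero =>
      rw [Nat.sub_zero, Hsum_succ_succ, Hsum_zero_left, add_zero, Nat.cast_zero,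
        mul_zero, add_zero, ih 0 c (Nat.zero_le m), Nat.sub_zero]
      norm_num
    | succ n' =>
      rcases eq_or_lt_of_le hn with heq | hlt
      · -- n' + 1 = m + 1, i.e. n' = m
        have hn' : n' = m := by omega
        subst hn'
        rw [W_gt p q c n' (n'+1) (by omega), mul_zero, zero_add]
        show W p q (c + p) n' n' = _
        rw [ih n' (c+p) le_rfl, Nat.sub_self, Nat.sub_self, Hsum_zero_right, Hsum_zero_right]
      · -- n' + 1 ≤ m
        have hle : n' + 1 ≤ m := by omega
        have hm : m + 1 - (n' + 1) = (m - (n'+1)) + 1 := by omega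
        rw [hm, Hsum_succ_succ]
        show (c + q * ((n'+1 : ℕ) : ℝ)) * W p q c m (n'+1) + W p q (c+p) m n' = _
        rw [ih (n'+1) c hle, ih n' (c+p) (by omega)]
        congr 1
        · congr 1
          · simp
        · have hm2 : m - n' = m - (n'+1) + 1 := by omega
          rw [hm2]
          congr 1
          funext k
          simp only [Fin.tail]
          have : ((n' + 1 - ((k.succ : Fin (n'+2)) : ℕ) : ℕ) : ℝ) = ((n' - (k:ℕ) : ℕ) : ℝ) := by
            simp [Fin.val_succ, Nat.succ_sub_succ]
          rw [this]
          push_cast [Fin.val_succ]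
          ring



noncomputable def dvec (n : ℕ) (p q : ℝ) : Fin (n+1) → ℝ :=
  fun k => 1 + p * ((k:ℕ):ℝ) + q * ((n - (k:ℕ) : ℕ) : ℝ)

noncomputable def Tn (n : ℕ) (p q : ℝ) (N : ℕ) : ℝ :=
  ∑ g ∈ Finset.Nat.antidiagonalTuple (n+1) N, ∏ k, (dvec n p q k / (1 + n*p)) ^ g k

noncomputable def rn (n : ℕ) (p q : ℝ) (k : Fin n) : ℝ := dvec n p q k.castSucc / (1 + n*p)

section facts
variable {n : ℕ} {p q : ℝ} (hq : 0 ≤ q) (hpq : q < p)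

include hq hpq

theorem cn_pos : (0:ℝ) < 1 + n*p := by
  have h1 : (0:ℝ) < p := lt_of_le_of_lt hq hpq
  have : (0:ℝ) ≤ (n:ℝ)*p := by positivity
  linarith

theorem dvec_pos (k : Fin (n+1)) : 0 < dvec n p q k := by
  have hp : (0:ℝ) < p := lt_of_le_of_lt hq hpq
  have h1 : (0:ℝ) ≤ p * ((k:ℕ):ℝ) := by positivity
  have h2 : (0:ℝ) ≤ q * ((n - (k:ℕ) : ℕ) : ℝ) := by positivity
  rw [dvec]; linarith

omit hq hpq in
theorem dvec_last : dvec n p q (Fin.last n) = 1 + n*p := by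
  rw [dvec]; simp [Fin.val_last]; ring

omit hq in
theorem dvec_lt (k : Fin n) : dvec n p q k.castSucc < 1 + n*p := by
  rw [dvec]
  have hk : (k:ℕ) ≤ n := le_of_lt k.isLt
  have hcast : ((n - (k:ℕ) : ℕ) : ℝ) = (n:ℝ) - (k:ℕ) := by rw [Nat.cast_sub hk]
  rw [Fin.coe_castSucc, hcast]
  have hk' : ((k:ℕ):ℝ) < (n:ℝ) := by exact_mod_cast k.isLt
  nlinarith [hk']

theorem rn_nonneg (k : Fin n) : 0 ≤ rn n p q k :=
  le_of_lt (div_pos (dvec_pos hq hpq _) (cn_pos hq hpq))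

theorem rn_lt_one (k : Fin n) : rn n p q k < 1 :=
  (div_lt_one (cn_pos hq hpq)).2 (dvec_lt hpq k)

theorem prod_rho (g : Fin (n+1) → ℕ) :
    ∏ k, (dvec n p q k / (1+(n:ℝ)*p)) ^ g k
      = ∏ k : Fin n, rn n p q k ^ g k.castSucc := by
  rw [Fin.prod_univ_castSucc, dvec_last, div_self (ne_of_gt (cn_pos hq hpq)), one_pow, mul_one]
  rfl


theorem Hsum_eq_Tn (N : ℕ) :
    Hsum (n+1) N (dvec n p q) = (1 + (n:ℝ)*p)^N * Tn n p q N := by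
  rw [Hsum, Tn, Finset.mul_sum]
  refine Finset.sum_congr rfl fun g hg => ?_
  rw [Finset.Nat.mem_antidiagonalTuple] at hg
  have hcn := cn_pos (n := n) hq hpq
  rw [← hg, ← Finset.prod_pow_eq_pow_sum, ← Finset.prod_mul_distrib]
  refine Finset.prod_congr rfl fun k _ => ?_
  rw [div_pow, mul_div_assoc', mul_comm, mul_div_assoc, div_self (by positivity), mul_one]

theorem Tn_le (N : ℕ) : Tn n p q N ≤ ∏ k : Fin n, (1 - rn n p q k)⁻¹ := by
  classical
  rw [Tn]
  rw [Finset.sum_congr rfl fun g _ => prod_rho hq hpq g]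
  have hinj : ∀ x ∈ Finset.Nat.antidiagonalTuple (n+1) N,
      ∀ y ∈ Finset.Nat.antidiagonalTuple (n+1) N,
      (fun g : Fin (n+1) → ℕ => g ∘ Fin.castSucc) x = (fun g => g ∘ Fin.castSucc) y → x = y := by
    intro x hx y hy hxy
    rw [Finset.Nat.mem_antidiagonalTuple] at hx hy
    rw [Fin.sum_univ_castSucc] at hx hy
    have hcs : ∀ k : Fin n, x k.castSucc = y k.castSucc := fun k => congrFun hxy k
    have hsum : ∑ k : Fin n, x k.castSucc = ∑ k : Fin n, y k.castSucc :=
      Finset.sum_congr rfl fun k _ => hcs k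
    funext i
    refine Fin.lastCases ?_ (fun k => hcs k) i
    omega
  have step1 : (∑ g ∈ Finset.Nat.antidiagonalTuple (n+1) N,
        ∏ k : Fin n, rn n p q k ^ g k.castSucc)
      = ∑ h ∈ (Finset.Nat.antidiagonalTuple (n+1) N).image (fun g => g ∘ Fin.castSucc),
          ∏ k : Fin n, rn n p q k ^ h k := by
    rw [Finset.sum_image hinj]
    rfl
  rw [step1]
  have step2 : (∑ h ∈ (Finset.Nat.antidiagonalTuple (n+1) N).image (fun g => g ∘ Fin.castSucc),
        ∏ k : Fin n, rn n p q k ^ h k)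
      ≤ ∑ h ∈ Fintype.piFinset (fun _ : Fin n => range (N+1)),
          ∏ k : Fin n, rn n p q k ^ h k := by
    refine Finset.sum_le_sum_of_subset_of_nonneg ?_ ?_
    · intro h hh
      rw [Finset.mem_image] at hh
      obtain ⟨g, hg, rfl⟩ := hh
      rw [Finset.Nat.mem_antidiagonalTuple] at hg
      rw [Fintype.mem_piFinset]
      intro k
      simp only [Function.comp_apply, Finset.mem_range]
      have : g k.castSucc ≤ N := hg ▸ Finset.single_le_sum (fun i _ => Nat.zero_le (g i)) (mem_univ _)
      omega
    · intro h _ _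
      exact Finset.prod_nonneg fun k _ => pow_nonneg (rn_nonneg hq hpq k) _
  refine step2.trans ?_
  rw [← Finset.prod_univ_sum]
  refine Finset.prod_le_prod (fun k _ => Finset.sum_nonneg fun j _ => pow_nonneg (rn_nonneg hq hpq k) _)
    (fun k _ => ?_)
  exact sum_le_hasSum _ (fun j _ => pow_nonneg (rn_nonneg hq hpq k) _)
    (hasSum_geometric_of_lt_one (rn_nonneg hq hpq k) (rn_lt_one hq hpq k))

theorem LB_le_Tn (M N : ℕ) (h : n * M ≤ N) :
    ∏ k : Fin n, ∑ j ∈ range (M+1), rn n p q k ^ j ≤ Tn n p q N := by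
  classical
  rw [Finset.prod_univ_sum, Tn]
  have hsumle : ∀ h0 ∈ Fintype.piFinset (fun _ : Fin n => range (M+1)),
      ∑ k : Fin n, h0 k ≤ N := by
    intro h0 hh0
    rw [Fintype.mem_piFinset] at hh0
    have : ∑ k : Fin n, h0 k ≤ (Finset.univ : Finset (Fin n)).card • M := by
      refine Finset.sum_le_card_nsmul _ _ _ fun k _ => ?_
      have := hh0 k; rw [Finset.mem_range] at this; omega
    simp only [Finset.card_univ, Fintype.card_fin, smul_eq_mul] at this
    omega
  have key : ∀ h0 ∈ Fintype.piFinset (fun _ : Fin n => range (M+1)),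
      (∏ k : Fin n, rn n p q k ^ h0 k)
        = ∏ k, (dvec n p q k / (1+(n:ℝ)*p)) ^ (Fin.snoc h0 (N - ∑ k : Fin n, h0 k) : Fin (n+1) → ℕ) k := by
    intro h0 _
    rw [prod_rho hq hpq]
    refine Finset.prod_congr rfl fun k _ => ?_
    rw [Fin.snoc_castSucc]
  rw [Finset.sum_congr rfl key]
  have hinj : ∀ x ∈ Fintype.piFinset (fun _ : Fin n => range (M+1)),
      ∀ y ∈ Fintype.piFinset (fun _ : Fin n => range (M+1)),
      (Fin.snoc x (N - ∑ k : Fin n, x k) : Fin (n+1) → ℕ) = Fin.snoc y (N - ∑ k : Fin n, y k) → x = y := by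
    intro x _ y _ hxy
    have := congrArg Fin.init hxy
    rwa [Fin.init_snoc, Fin.init_snoc] at this
  refine le_trans (le_of_eq (Finset.sum_image
      (f := fun t : Fin (n+1) → ℕ => ∏ k, (dvec n p q k / (1+(n:ℝ)*p)) ^ t k) hinj).symm)
    (Finset.sum_le_sum_of_subset_of_nonneg ?_ ?_)
  · intro g hg
    rw [Finset.mem_image] at hg
    obtain ⟨h0, hh0, rfl⟩ := hg
    rw [Finset.Nat.mem_antidiagonalTuple, Fin.sum_univ_castSucc]
    simp only [Fin.snoc_castSucc, Fin.snoc_last]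
    have := hsumle h0 hh0
    omega
  · intro g _ _
    refine Finset.prod_nonneg fun k _ => pow_nonneg ?_ _
    exact div_nonneg (le_of_lt (dvec_pos hq hpq k)) (le_of_lt (cn_pos hq hpq))

end facts

section limits
variable {n : ℕ} {p q : ℝ} (hq : 0 ≤ q) (hpq : q < p)
include hq hpq

theorem LB_tendsto :
    Filter.Tendsto (fun M => ∏ k : Fin n, ∑ j ∈ range (M+1), rn n p q k ^ j) Filter.atTop
      (nhds (∏ k : Fin n, (1 - rn n p q k)⁻¹)) := by
  refine tendsto_finset_prod _ fun k _ => ?_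
  have h := (hasSum_geometric_of_lt_one (rn_nonneg hq hpq k) (rn_lt_one hq hpq k)).tendsto_sum_nat
  exact h.comp (Filter.tendsto_add_atTop_nat 1)

theorem Tn_tendsto :
    Filter.Tendsto (Tn n p q) Filter.atTop (nhds (∏ k : Fin n, (1 - rn n p q k)⁻¹)) := by
  have hlo : Filter.Tendsto (fun N => ∏ k : Fin n, ∑ j ∈ range (N / n + 1), rn n p q k ^ j)
      Filter.atTop (nhds (∏ k : Fin n, (1 - rn n p q k)⁻¹)) := by
    rcases Nat.eq_zero_or_pos n with rfl | hn
    · simpa using (tendsto_const_nhds : Filter.Tendsto (fun _ : ℕ => (1:ℝ)) Filter.atTop _)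
    · refine (LB_tendsto hq hpq).comp ?_
      refine Filter.tendsto_atTop_atTop.2 fun b => ⟨b * n, fun a ha => ?_⟩
      exact (Nat.le_div_iff_mul_le hn).2 ha
  refine tendsto_of_tendsto_of_tendsto_of_le_of_le hlo tendsto_const_nhds
    (fun N => LB_le_Tn hq hpq _ _ ?_) (fun N => Tn_le hq hpq N)
  exact le_trans (le_of_eq (Nat.mul_comm _ _)) (Nat.div_mul_le_self N n)

theorem key_tendsto :
    Filter.Tendsto (fun N => Hsum (n+1) N (dvec n p q) * (n.factorial : ℝ) * (p - q) ^ n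
        / (1 + (n:ℝ) * p) ^ (N + n)) Filter.atTop (nhds 1) := by
  have hcn := cn_pos (n := n) hq hpq
  have hfact : ((n.factorial : ℝ)) * (p - q) ^ n
      = ∏ k : Fin n, ((1 + (n:ℝ)*p) - dvec n p q k.castSucc) := by
    have h1 : ∀ k : Fin n, (1 + (n:ℝ)*p) - dvec n p q k.castSucc = (p - q) * ((n:ℝ) - (k:ℕ)) := by
      intro k
      rw [dvec]
      have hk : (k:ℕ) ≤ n := le_of_lt k.isLt
      rw [Fin.coe_castSucc, Nat.cast_sub hk]
      ring
    have h2 : ∏ k : Fin n, ((n:ℝ) - (k:ℕ)) = (n.factorial : ℝ) := by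
      rw [Fin.prod_univ_eq_prod_range (fun k => ((n:ℝ) - (k:ℕ)))]
      have h3 : ∀ k ∈ range n, ((n:ℝ) - (k:ℕ)) = ((n - k : ℕ) : ℝ) := by
        intro k hk
        rw [Finset.mem_range] at hk
        rw [Nat.cast_sub (le_of_lt hk)]
      rw [Finset.prod_congr rfl h3, ← Nat.cast_prod,
        ← Nat.descFactorial_eq_prod_range, Nat.descFactorial_self]
    rw [Finset.prod_congr rfl fun k _ => h1 k, Finset.prod_mul_distrib, Finset.prod_const,
      Finset.card_univ, Fintype.card_fin, h2]
    ring
  have hK : (∏ k : Fin n, (1 - rn n p q k)) * (1 + (n:ℝ)*p) ^ n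
      = (n.factorial : ℝ) * (p - q) ^ n := by
    have hc : ((1 + (n:ℝ)*p)) ^ n = ∏ _k : Fin n, (1 + (n:ℝ)*p) := by
      rw [Finset.prod_const, Finset.card_univ, Fintype.card_fin]
    rw [hfact, hc, ← Finset.prod_mul_distrib]
    refine Finset.prod_congr rfl fun k _ => ?_
    rw [rn, sub_mul, one_mul, div_mul_cancel₀ _ (ne_of_gt hcn)]
  have hTlim := Tn_tendsto (n := n) hq hpq
  have hne : ∀ k : Fin n, (1 - rn n p q k) ≠ 0 := fun k =>
    ne_of_gt (by have := rn_lt_one hq hpq k; linarith)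
  have hPK : (∏ k : Fin n, (1 - rn n p q k)⁻¹) * (∏ k : Fin n, (1 - rn n p q k)) = 1 := by
    rw [← Finset.prod_mul_distrib]
    rw [Finset.prod_congr rfl fun k _ => inv_mul_cancel₀ (hne k)]
    exact Finset.prod_const_one
  have heq : ∀ N, Hsum (n+1) N (dvec n p q) * (n.factorial : ℝ) * (p - q) ^ n
      / (1 + (n:ℝ) * p) ^ (N + n) = Tn n p q N * ∏ k : Fin n, (1 - rn n p q k) := by
    intro N
    rw [Hsum_eq_Tn hq hpq, pow_add, div_eq_iff (by positivity)]
    linear_combination (-(1 + (n:ℝ)*p)^N * Tn n p q N) * hK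
  have hlim2 : Filter.Tendsto (fun N => Tn n p q N * ∏ k : Fin n, (1 - rn n p q k))
      Filter.atTop (nhds ((∏ k : Fin n, (1 - rn n p q k)⁻¹) * ∏ k : Fin n, (1 - rn n p q k))) :=
    hTlim.mul_const _
  rw [hPK] at hlim2
  exact hlim2.congr fun N => (heq N).symm

end limits

theorem R_eq_W (L n : ℕ) (p q : ℝ) : R L n p q = W p q 1 (L-1) n := by
  rw [R, W, Finset.sum_filter]
  refine Finset.sum_congr rfl fun a _ => ?_
  split_ifs with h
  · rw [wt, wtc, Finset.prod_filter]
  · rfl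

/-- for a fixed number of particles `n` and `0 ≤ q < p`, the restricted
partition function satisfies `R(L, n; p, q) ~ (1 + n·p)^(L-1) / (n!·(p-q)^n)` as `L → ∞`. -/
theorem R_asymptotics_finite_particles (n : ℕ) (p q : ℝ) (hq : 0 ≤ q) (hpq : q < p) :
    Filter.Tendsto
      (fun L : ℕ => R L n p q * (n.factorial : ℝ) * (p - q) ^ n / (1 + (n : ℝ) * p) ^ (L - 1))
      Filter.atTop (nhds 1) := by
  have hkey := key_tendsto (n := n) hq hpq
  have hcomp : Filter.Tendsto (fun L : ℕ => L - 1 - n) Filter.atTop Filter.atTop :=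
    Filter.tendsto_atTop_atTop.2 fun b => ⟨b + 1 + n, fun a ha => by omega⟩
  refine (hkey.comp hcomp).congr' ?_
  filter_upwards [Filter.eventually_ge_atTop (n+1)] with L hL
  have h1 : L - 1 - n + n = L - 1 := by omega
  have h2 : R L n p q = Hsum (n+1) (L-1-n) (dvec n p q) := by
    rw [R_eq_W, W_eq_Hsum p q (L-1) n 1 (by omega)]
    rfl
  simp only [Function.comp_apply, h1, h2]
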